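/- Let K ⊆ ℝⁿ be a convex body and v a unit vector. Define Z⁺(K,v) = {x + λv : x ∈ K, λ ≥ 0} and β_v(K) = Z⁺(K,v) ∩ ⋂_{x∈K} B(x, d) where d = diam K. Then β_v(K) is a convex body containing K with diam β_v(K) = d. -/

import Mathlib

open scoped RealInnerProductSpace
open Metric

theorem beta_v_tight_cover {n : ℕ} (K : Set (EuclideanSpace ℝ (Fin n)))
    (hKc : IsCompact K) (hKconv : Convex ℝ K) (hKne : K.Nonempty)
    (v : EuclideanSpace ℝ (Fin n)) (hv : ‖v‖ = 1) :
    IsCompact ({y | ∃ x ∈ K, ∃ lam : ℝ, 0 ≤ lam ∧ y = x + lam • v} ∩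
        ⋂ x ∈ K, closedBall x (Metric.diam K)) ∧
    Convex ℝ ({y | ∃ x ∈ K, ∃ lam : ℝ, 0 ≤ lam ∧ y = x + lam • v} ∩
        ⋂ x ∈ K, closedBall x (Metric.diam K)) ∧
    K ⊆ ({y | ∃ x ∈ K, ∃ lam : ℝ, 0 ≤ lam ∧ y = x + lam • v} ∩
        ⋂ x ∈ K, closedBall x (Metric.diam K)) ∧
    Metric.diam ({y | ∃ x ∈ K, ∃ lam : ℝ, 0 ≤ lam ∧ y = x + lam • v} ∩
        ⋂ x ∈ K, closedBall x (Metric.diam K)) = Metric.diam K := by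
  set d := Metric.diam K with hd
  set Z : Set (EuclideanSpace ℝ (Fin n)) := {y | ∃ x ∈ K, ∃ lam : ℝ, 0 ≤ lam ∧ y = x + lam • v} with hZ
  set T : Set (EuclideanSpace ℝ (Fin n)) := ⋂ x ∈ K, closedBall x d with hT
  have hd0 : 0 ≤ d := Metric.diam_nonneg
  have hbd := hKc.isBounded
  have hTclosed : IsClosed T := isClosed_biInter fun x _ => Metric.isClosed_closedBall
  -- membership in T gives distance bound to every point of K
  have hTmem : ∀ y ∈ T, ∀ x ∈ K, dist y x ≤ d := by
    intro y hy x hx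
    have := Set.mem_iInter₂.1 hy x hx
    rwa [Metric.mem_closedBall] at this
  -- key distance bound
  have key : ∀ x ∈ K, ∀ x' ∈ K, ∀ lam lam' : ℝ, 0 ≤ lam → lam ≤ lam' →
      (x' + lam' • v) ∈ T → dist (x + lam • v) (x' + lam' • v) ≤ d := by
    intro x hx x' hx' lam lam' hlam hle hyT
    have h1 : ‖x' - x‖ ≤ d := by
      rw [← dist_eq_norm]; exact Metric.dist_le_diam_of_mem hbd hx' hx
    have h2 : ‖x' - x + lam' • v‖ ≤ d := by
      have h := hTmem _ hyT x hx
      rw [dist_eq_norm] at h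
      have : x' + lam' • v - x = x' - x + lam' • v := by abel
      rwa [this] at h
    set μ := lam' - lam with hμdef
    have hμ0 : 0 ≤ μ := sub_nonneg.2 hle
    have hμle : μ ≤ lam' := by simp only [hμdef]; linarith
    have goal : ‖x' - x + μ • v‖ ≤ d := by
      rcases eq_or_lt_of_le (le_trans hμ0 hμle) with h | h
      · have hz : μ = 0 := le_antisymm (h ▸ hμle) hμ0
        simpa [hz] using h1
      · set s := μ / lam' with hsdef
        have hs0 : 0 ≤ s := div_nonneg hμ0 h.le
        have hs1 : s ≤ 1 := (div_le_one h).2 hμle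
        have hμs : μ = s * lam' := (div_mul_cancel₀ μ h.ne').symm
        have hrw : x' - x + μ • v
            = (1 - s) • (x' - x) + s • (x' - x + lam' • v) := by
          rw [hμs]; module
        rw [hrw]
        calc ‖(1 - s) • (x' - x) + s • (x' - x + lam' • v)‖
            ≤ ‖(1 - s) • (x' - x)‖ + ‖s • (x' - x + lam' • v)‖ := norm_add_le _ _
          _ = (1 - s) * ‖x' - x‖ + s * ‖x' - x + lam' • v‖ := by
              rw [norm_smul, norm_smul, Real.norm_of_nonneg (by linarith),
                Real.norm_of_nonneg hs0]
          _ ≤ (1 - s) * d + s * d :=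
              add_le_add (mul_le_mul_of_nonneg_left h1 (by linarith))
                (mul_le_mul_of_nonneg_left h2 hs0)
          _ = d := by ring
    rw [dist_eq_norm]
    have : x + lam • v - (x' + lam' • v) = -(x' - x + μ • v) := by
      simp only [hμdef]; module
    rw [this, norm_neg]; exact goal
  -- K ⊆ Z ∩ T
  have hKsub : K ⊆ Z ∩ T := by
    intro x hx
    refine ⟨⟨x, hx, 0, le_refl _, by simp⟩, ?_⟩
    exact Set.mem_iInter₂.2 fun z hz =>
      Metric.mem_closedBall.2 (Metric.dist_le_diam_of_mem hbd hx hz)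
  -- compactness
  have hcompact : IsCompact (Z ∩ T) := by
    set C : Set (EuclideanSpace ℝ (Fin n)) := (fun p : EuclideanSpace ℝ (Fin n) × ℝ => p.1 + p.2 • v) '' (K ×ˢ Set.Icc 0 d) with hC
    have hCc : IsCompact C :=
      (hKc.prod isCompact_Icc).image (continuous_fst.add (continuous_snd.smul continuous_const))
    have heq : Z ∩ T = C ∩ T := by
      apply Set.Subset.antisymm
      · rintro y ⟨⟨x, hx, lam, hlam, rfl⟩, hyT⟩
        refine ⟨⟨(x, lam), ⟨hx, hlam, ?_⟩, rfl⟩, hyT⟩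
        have h := hTmem _ hyT x hx
        rw [dist_eq_norm] at h
        have : x + lam • v - x = lam • v := by abel
        rw [this, norm_smul, hv, mul_one, Real.norm_of_nonneg hlam] at h
        exact h
      · rintro y ⟨⟨⟨x, lam⟩, ⟨hx, hlam, _⟩, rfl⟩, hyT⟩
        exact ⟨⟨x, hx, lam, hlam, rfl⟩, hyT⟩
    rw [heq]
    exact hCc.inter_right hTclosed
  -- convexity
  have hconv : Convex ℝ (Z ∩ T) := by
    refine Convex.inter ?_ (convex_iInter₂ fun x _ => convex_closedBall x d)
    rintro y₁ ⟨x₁, hx₁, l₁, hl₁, rfl⟩ y₂ ⟨x₂, hx₂, l₂, hl₂, rfl⟩ a b ha hb hab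
    refine ⟨a • x₁ + b • x₂, hKconv hx₁ hx₂ ha hb hab, a * l₁ + b * l₂,
      by positivity, ?_⟩
    module
  -- diameter
  have hdiam : Metric.diam (Z ∩ T) = d := by
    refine le_antisymm ?_ (Metric.diam_mono hKsub hcompact.isBounded)
    refine Metric.diam_le_of_forall_dist_le hd0 ?_
    rintro y ⟨⟨x, hx, lam, hlam, rfl⟩, hyT⟩ y' ⟨⟨x', hx', lam', hlam', rfl⟩, hy'T⟩
    rcases le_total lam lam' with hle | hle
    · exact key x hx x' hx' lam lam' hlam hle hy'T
    · rw [dist_comm]; exact key x' hx' x hx lam' lam hlam' hle hyT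
  exact ⟨hcompact, hconv, hKsub, hdiam⟩
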